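/- The image of the differential map dμ(θ) at θ = (W_L, ..., W_1) equals the vector sum Σ_{j=1}^{L} col(W_{L∼j}) ⊗ row(W_{j−1∼0}) of matrix subspaces of ℝ^{d_L × d_0}, where U ⊗ V = {M : col M ⊆ U, row M ⊆ V}. -/

import Mathlib

open Matrix

/-- The subsequence matrix `W_{k∼i} = W_k W_{k−1} ⋯ W_{i+1}` of a linear neural network.
Here `W j` is the matrix of edge layer `j+1` (mapping unit layer `j` to unit layer `j+1`),
so `subseq d W i k` is the product of the edge-layer matrices carrying unit layer `i`
to unit layer `k`.  By convention `subseq d W k k` is the identity, and values with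
`k < i` are junk. -/
noncomputable def subseq (d : ℕ → ℕ)
    (W : ∀ j : ℕ, Matrix (Fin (d (j + 1))) (Fin (d j)) ℝ) (i : ℕ) :
    (k : ℕ) → Matrix (Fin (d k)) (Fin (d i)) ℝ
  | 0 =>
    if h : i = 0 then
      (1 : Matrix (Fin (d 0)) (Fin (d 0)) ℝ).submatrix id (Fin.cast (congrArg d h))
    else 0
  | k + 1 =>
    if h : i = k + 1 then
      (1 : Matrix (Fin (d (k + 1))) (Fin (d (k + 1))) ℝ).submatrix id (Fin.cast (congrArg d h))
    else W k * subseq d W i k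

/-- The tensor product of subspaces `U ⊆ ℝ^p`, `V ⊆ ℝ^q`:
`U ⊗ V = {M ∈ ℝ^{p×q} : col M ⊆ U and row M ⊆ V}`. -/
def matSub {p q : ℕ} (U : Submodule ℝ (Fin p → ℝ)) (V : Submodule ℝ (Fin q → ℝ)) :
    Submodule ℝ (Matrix (Fin p) (Fin q) ℝ) where
  carrier := {M | (∀ v, M.mulVec v ∈ U) ∧ ∀ v, Mᵀ.mulVec v ∈ V}
  add_mem' := by
    intro a b ha hb
    refine ⟨fun v => ?_, fun v => ?_⟩
    · rw [Matrix.add_mulVec]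
      exact U.add_mem (ha.1 v) (hb.1 v)
    · rw [Matrix.transpose_add, Matrix.add_mulVec]
      exact V.add_mem (ha.2 v) (hb.2 v)
  zero_mem' := by
    refine ⟨fun v => ?_, fun v => ?_⟩
    · rw [Matrix.zero_mulVec]
      exact U.zero_mem
    · rw [Matrix.transpose_zero, Matrix.zero_mulVec]
      exact V.zero_mem
  smul_mem' := by
    intro c a ha
    refine ⟨fun v => ?_, fun v => ?_⟩
    · rw [Matrix.smul_mulVec]
      exact U.smul_mem c (ha.1 v)
    · rw [Matrix.transpose_smul, Matrix.smul_mulVec]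
      exact V.smul_mem c (ha.2 v)

/-- The differential map `dμ(θ) : (ΔW_L, …, ΔW_1) ↦ Σ_{j=1}^{L} W_{L∼j} ΔW_j W_{j−1∼0}`
of the matrix multiplication map at `θ = (W_L, …, W_1)`, as a linear map from the
weight space to `ℝ^{d_L × d_0}`.  Edge layer `j` of the paper is index `j0 = j − 1`. -/
noncomputable def dmu (L : ℕ) (d : ℕ → ℕ)
    (W : ∀ j : ℕ, Matrix (Fin (d (j + 1))) (Fin (d j)) ℝ) :
    (∀ j0 : Fin L, Matrix (Fin (d (j0.1 + 1))) (Fin (d j0.1)) ℝ)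
      →ₗ[ℝ] Matrix (Fin (d L)) (Fin (d 0)) ℝ where
  toFun Δ := ∑ j0 : Fin L, subseq d W (j0.1 + 1) L * Δ j0 * subseq d W 0 j0.1
  map_add' a b := by
    simp only [Pi.add_apply, Matrix.mul_add, Matrix.add_mul]
    rw [Finset.sum_add_distrib]
  map_smul' c a := by
    simp only [Pi.smul_apply, Matrix.mul_smul, Matrix.smul_mul, RingHom.id_apply]
    rw [Finset.smul_sum]


lemma exists_left {p m q : ℕ} (A : Matrix (Fin p) (Fin m) ℝ) (M : Matrix (Fin p) (Fin q) ℝ)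
    (h : ∀ v, M.mulVec v ∈ LinearMap.range A.mulVecLin) : ∃ X : Matrix (Fin m) (Fin q) ℝ, A * X = M := by
  have hc : ∀ c : Fin q, ∃ x : Fin m → ℝ, A.mulVec x = fun r => M r c := by
    intro c
    obtain ⟨x, hx⟩ := h (Pi.single c 1)
    refine ⟨x, ?_⟩
    rw [Matrix.mulVecLin_apply] at hx
    rw [hx, Matrix.mulVec_single]
    simp
    rfl
  choose x hx using hc
  refine ⟨Matrix.of fun r c => x c r, ?_⟩
  ext i c
  have := congrFun (hx c) i
  simpa [Matrix.mul_apply, Matrix.mulVec, dotProduct] using this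

lemma exists_proj {q : ℕ} (V : Submodule ℝ (Fin q → ℝ)) :
    ∃ Q : Matrix (Fin q) (Fin q) ℝ, (∀ v ∈ V, Q.mulVec v = v) ∧ ∀ v, Q.mulVec v ∈ V := by
  obtain ⟨W, hW⟩ := Submodule.exists_isCompl V
  set π : (Fin q → ℝ) →ₗ[ℝ] (Fin q → ℝ) := V.subtype ∘ₗ V.projectionOnto W hW
  refine ⟨LinearMap.toMatrix' π, ?_, ?_⟩
  · intro v hv
    have : (LinearMap.toMatrix' π).mulVec v = π v := by
      rw [← Matrix.toLin'_apply, Matrix.toLin'_toMatrix']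
    rw [this]
    simp [π, Submodule.projectionOnto_apply_left hW ⟨v, hv⟩]
  · intro v
    have : (LinearMap.toMatrix' π).mulVec v = π v := by
      rw [← Matrix.toLin'_apply, Matrix.toLin'_toMatrix']
    rw [this]
    exact (V.projectionOnto W hW v).2

lemma exists_factor {p m n q : ℕ} (A : Matrix (Fin p) (Fin m) ℝ)
    (B : Matrix (Fin n) (Fin q) ℝ) (M : Matrix (Fin p) (Fin q) ℝ)
    (hcol : ∀ v, M.mulVec v ∈ LinearMap.range A.mulVecLin)
    (hrow : ∀ v, Mᵀ.mulVec v ∈ LinearMap.range Bᵀ.mulVecLin) :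
    ∃ Δ : Matrix (Fin m) (Fin n) ℝ, A * Δ * B = M := by
  obtain ⟨X, hX⟩ := exists_left A M hcol
  obtain ⟨Q, hQ1, hQ2⟩ := exists_proj (LinearMap.range Bᵀ.mulVecLin)
  have hrowmem : ∀ i : Fin p, (fun k => M i k) ∈ LinearMap.range Bᵀ.mulVecLin := by
    intro i
    have := hrow (Pi.single i 1)
    rwa [Matrix.mulVec_single, show MulOpposite.op (1:ℝ) • Mᵀ.col i = fun k => M i k by
      ext k; simp [Matrix.transpose_apply]] at this
  have hMQ : M * Qᵀ = M := by
    ext i c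
    have h1 : Q.mulVec (fun k => M i k) = fun k => M i k := hQ1 _ (hrowmem i)
    have := congrFun h1 c
    simpa [Matrix.mul_apply, Matrix.mulVec, dotProduct, Matrix.transpose_apply,
      mul_comm] using this
  have hN : ∀ v, (Q * Xᵀ).mulVec v ∈ LinearMap.range Bᵀ.mulVecLin := by
    intro v
    rw [← Matrix.mulVec_mulVec]
    exact hQ2 _
  obtain ⟨Y, hY⟩ := exists_left Bᵀ (Q * Xᵀ) hN
  refine ⟨Yᵀ, ?_⟩
  have h2 : Yᵀ * B = X * Qᵀ := by
    have := congrArg Matrix.transpose hY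
    rwa [Matrix.transpose_mul, Matrix.transpose_transpose, Matrix.transpose_mul,
      Matrix.transpose_transpose] at this
  rw [Matrix.mul_assoc, h2, ← Matrix.mul_assoc, hX, hMQ]

/-- Lemma `coldmu`.
The image of the differential map `dμ(θ)` equals the vector sum
`Σ_{j=1}^{L} col(W_{L∼j}) ⊗ row(W_{j−1∼0})` of matrix subspaces of `ℝ^{d_L × d_0}`,
where `U ⊗ V = {M : col M ⊆ U, row M ⊆ V}`. -/
theorem image_dmu (L : ℕ) (d : ℕ → ℕ)
    (W : ∀ j : ℕ, Matrix (Fin (d (j + 1))) (Fin (d j)) ℝ) :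
    LinearMap.range (dmu L d W)
      = ⨆ j0 : Fin L,
          matSub (LinearMap.range (Matrix.mulVecLin (subseq d W (j0.1 + 1) L)))
            (LinearMap.range (Matrix.mulVecLin (subseq d W 0 j0.1)ᵀ)) := by
  apply le_antisymm
  · rintro _ ⟨Δ, rfl⟩
    show (∑ j0 : Fin L, subseq d W (j0.1 + 1) L * Δ j0 * subseq d W 0 j0.1) ∈ _
    refine Submodule.sum_mem _ fun j0 _ => ?_
    refine le_iSup (fun j0 : Fin L =>
      matSub (LinearMap.range (Matrix.mulVecLin (subseq d W (j0.1 + 1) L)))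
        (LinearMap.range (Matrix.mulVecLin (subseq d W 0 j0.1)ᵀ))) j0 ?_
    constructor
    · intro v
      rw [Matrix.mul_assoc, ← Matrix.mulVec_mulVec]
      exact ⟨_, rfl⟩
    · intro v
      rw [Matrix.transpose_mul, Matrix.transpose_mul, ← Matrix.mulVec_mulVec]
      exact ⟨_, rfl⟩
  · refine iSup_le fun j0 => ?_
    rintro M ⟨hcol, hrow⟩
    obtain ⟨Δ, hΔ⟩ := exists_factor (subseq d W (j0.1 + 1) L) (subseq d W 0 j0.1) M hcol hrow
    set Δ' : ∀ i : Fin L, Matrix (Fin (d (i.1 + 1))) (Fin (d i.1)) ℝ := Pi.single j0 Δ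
      with hΔ'
    refine ⟨Δ', ?_⟩
    show (∑ i : Fin L, subseq d W (i.1 + 1) L * Δ' i * subseq d W 0 i.1) = M
    rw [Finset.sum_eq_single j0]
    · rw [hΔ', Pi.single_eq_same, hΔ]
    · intro b _ hb
      rw [hΔ', Pi.single_eq_of_ne hb, Matrix.mul_zero, Matrix.zero_mul]
    · intro h; exact absurd (Finset.mem_univ j0) h
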